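/- If x ∈ C[0,1] admits roughness exponent R ∈ [0,1], g ∈ C¹(ℝ), and g' is nonzero on the range x([0,1]), then u := g∘x also admits roughness exponent R. -/

import Mathlib

open Finset Filter

noncomputable def pVar (x : ℝ → ℝ) (p : ℝ) (n : ℕ) : ℝ :=
  ∑ k ∈ range (2 ^ n), |x ((k + 1) / 2 ^ n) - x (k / 2 ^ n)| ^ p

/-- `x` admits the roughness exponent `R`. -/
def admitsRoughness (x : ℝ → ℝ) (R : ℝ) : Prop :=
  (∀ p : ℝ, 1 ≤ p → p > 1 / R → Tendsto (fun n => pVar x p n) atTop (nhds 0)) ∧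
  (∀ p : ℝ, 1 ≤ p → p < 1 / R → Tendsto (fun n => pVar x p n) atTop atTop)

theorem stmt1 (x g : ℝ → ℝ) (R : ℝ) (hR : R ∈ Set.Icc (0 : ℝ) 1)
    (hx : ContinuousOn x (Set.Icc 0 1))
    (hrough : admitsRoughness x R)
    (hg : ContDiff ℝ 1 g)
    (hg' : ∀ t ∈ Set.Icc (0 : ℝ) 1, deriv g (x t) ≠ 0) :
    admitsRoughness (g ∘ x) R := by
  set K := x '' Set.Icc (0:ℝ) 1 with hKdef
  have hK : IsCompact K := isCompact_Icc.image_of_continuousOn hx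
  have hKne : K.Nonempty := ⟨x 0, Set.mem_image_of_mem x (by norm_num)⟩
  have hdg : Continuous (deriv g) := hg.continuous_deriv le_rfl
  have hKconn : K.OrdConnected := (isPreconnected_Icc.image x hx).ordConnected
  have hg'K : ∀ y ∈ K, deriv g y ≠ 0 := by rintro y ⟨t, ht, rfl⟩; exact hg' t ht
  obtain ⟨ξc, hξcK, hmin⟩ := hK.exists_isMinOn hKne (hdg.abs.continuousOn)
  obtain ⟨ξC, hξCK, hmax⟩ := hK.exists_isMaxOn hKne (hdg.abs.continuousOn)
  set c := |deriv g ξc| with hcdef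
  set C := |deriv g ξC| with hCdef
  have hc : 0 < c := abs_pos.mpr (hg'K _ hξcK)
  have hC0 : 0 ≤ C := abs_nonneg _
  -- mean value theorem
  have key : ∀ a ∈ Set.Icc (0:ℝ) 1, ∀ b ∈ Set.Icc (0:ℝ) 1,
      ∃ ξ ∈ K, g (x b) - g (x a) = deriv g ξ * (x b - x a) := by
    intro a ha b hb
    have hsub : Set.uIcc (x a) (x b) ⊆ K :=
      hKconn.uIcc_subset (Set.mem_image_of_mem x ha) (Set.mem_image_of_mem x hb)
    rcases lt_trichotomy (x a) (x b) with hlt | heq | hlt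
    · obtain ⟨ξ, hξ, hval⟩ := exists_deriv_eq_slope g hlt hg.continuous.continuousOn
        (fun y _ => (hg.differentiable one_ne_zero).differentiableAt.differentiableWithinAt)
      refine ⟨ξ, hsub ?_, ?_⟩
      · exact Set.Icc_subset_uIcc (Set.mem_Icc_of_Ioo hξ)
      · rw [eq_div_iff (sub_ne_zero.mpr hlt.ne')] at hval
        exact hval.symm
    · exact ⟨x a, Set.mem_image_of_mem x ha, by rw [heq]; ring⟩
    · obtain ⟨ξ, hξ, hval⟩ := exists_deriv_eq_slope g hlt hg.continuous.continuousOn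
        (fun y _ => (hg.differentiable one_ne_zero).differentiableAt.differentiableWithinAt)
      refine ⟨ξ, hsub ?_, ?_⟩
      · exact Set.Icc_subset_uIcc' (Set.mem_Icc_of_Ioo hξ)
      · rw [eq_div_iff (sub_ne_zero.mpr hlt.ne')] at hval
        linear_combination hval
  -- termwise bounds
  have hterm : ∀ n : ℕ, ∀ k ∈ range (2 ^ n),
      c * |x ((k + 1) / 2 ^ n) - x (k / 2 ^ n)| ≤
        |(g ∘ x) ((k + 1) / 2 ^ n) - (g ∘ x) (k / 2 ^ n)| ∧
      |(g ∘ x) ((k + 1) / 2 ^ n) - (g ∘ x) (k / 2 ^ n)| ≤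
        C * |x ((k + 1) / 2 ^ n) - x (k / 2 ^ n)| := by
    intro n k hk
    have hk' : (k : ℝ) < 2 ^ n := by exact_mod_cast Finset.mem_range.mp hk
    have h2 : (0:ℝ) < 2 ^ n := by positivity
    have ha : ((k:ℝ) / 2 ^ n) ∈ Set.Icc (0:ℝ) 1 :=
      ⟨by positivity, by rw [div_le_one h2]; linarith⟩
    have hb : (((k:ℝ) + 1) / 2 ^ n) ∈ Set.Icc (0:ℝ) 1 := by
      constructor
      · positivity
      · rw [div_le_one h2]
        have : (k:ℝ) + 1 ≤ 2 ^ n := by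
          have : (k:ℕ) + 1 ≤ 2 ^ n := Finset.mem_range.mp hk
          exact_mod_cast this
        linarith
    obtain ⟨ξ, hξK, hval⟩ := key _ ha _ hb
    have heq : |(g ∘ x) ((k + 1) / 2 ^ n) - (g ∘ x) (k / 2 ^ n)| =
        |deriv g ξ| * |x ((k + 1) / 2 ^ n) - x (k / 2 ^ n)| := by
      simp only [Function.comp_apply]
      rw [hval, abs_mul]
    rw [heq]
    constructor
    · exact mul_le_mul_of_nonneg_right (hmin hξK) (abs_nonneg _)
    · exact mul_le_mul_of_nonneg_right (hmax hξK) (abs_nonneg _)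
  have hpvar_nonneg : ∀ (f : ℝ → ℝ) (p : ℝ) (n : ℕ), 0 ≤ pVar f p n := fun f p n =>
    Finset.sum_nonneg fun k _ => Real.rpow_nonneg (abs_nonneg _) p
  have hub : ∀ p : ℝ, 0 ≤ p → ∀ n, pVar (g ∘ x) p n ≤ C ^ p * pVar x p n := by
    intro p hp n
    unfold pVar
    rw [Finset.mul_sum]
    refine Finset.sum_le_sum fun k hk => ?_
    calc |(g ∘ x) ((k + 1) / 2 ^ n) - (g ∘ x) (k / 2 ^ n)| ^ p
        ≤ (C * |x ((k + 1) / 2 ^ n) - x (k / 2 ^ n)|) ^ p :=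
          Real.rpow_le_rpow (abs_nonneg _) (hterm n k hk).2 hp
      _ = C ^ p * |x ((k + 1) / 2 ^ n) - x (k / 2 ^ n)| ^ p :=
          Real.mul_rpow hC0 (abs_nonneg _)
  have hlb : ∀ p : ℝ, 0 ≤ p → ∀ n, c ^ p * pVar x p n ≤ pVar (g ∘ x) p n := by
    intro p hp n
    unfold pVar
    rw [Finset.mul_sum]
    refine Finset.sum_le_sum fun k hk => ?_
    calc c ^ p * |x ((k + 1) / 2 ^ n) - x (k / 2 ^ n)| ^ p
        = (c * |x ((k + 1) / 2 ^ n) - x (k / 2 ^ n)|) ^ p :=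
          (Real.mul_rpow hc.le (abs_nonneg _)).symm
      _ ≤ |(g ∘ x) ((k + 1) / 2 ^ n) - (g ∘ x) (k / 2 ^ n)| ^ p :=
          Real.rpow_le_rpow (by positivity) (hterm n k hk).1 hp
  constructor
  · intro p hp hpgt
    have h0 := hrough.1 p hp hpgt
    refine squeeze_zero (fun n => hpvar_nonneg _ _ _) (fun n => hub p (by linarith) n) ?_
    simpa using h0.const_mul (C ^ p)
  · intro p hp hplt
    have h0 := hrough.2 p hp hplt
    have hcp : 0 < c ^ p := Real.rpow_pos_of_pos hc p
    exact tendsto_atTop_mono (fun n => hlb p (by linarith) n) (h0.const_mul_atTop hcp)
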